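/- (Correctness of the reduction to a single weighted string) Let X_1,…,X_n be an SLP representing T = val(X_n), let q ≥ 2, and let i_1 < … < i_m be exactly those indices i for which X_i = X_ℓ X_r and |val(X_i)| ≥ q. Let z = t_{i_1}·t_{i_2}·…·t_{i_m}, and define weights w : {1,…,|z|} → ℕ blockwise: if position p of z is the s-th position of the block t_{i_j} (1 ≤ s ≤ |t_{i_j}|), then w(p) = vOcc(X_{i_j}) if s ≤ |t_{i_j}| − q + 1, and w(p) = 0 otherwise. Then for every q-gram P ∈ Σ^q, |Occ(T, P)| = Σ_{k ∈ Occ(z, P)} w(k). -/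

import Mathlib

/-- The substring `S[u:v]` (1-indexed, inclusive; empty if `v < u`). -/
def substr {α : Type*} (S : List α) (u v : ℕ) : List α := (S.drop (u - 1)).take (v + 1 - u)

/-- `pre(S,q) = S[1:min(q,|S|)]`, the length-`q` prefix of `S`. -/
def pre {α : Type*} (S : List α) (q : ℕ) : List α := S.take q

/-- `suf(S,q) = S[max(1,|S|-q+1):|S|]`, the length-`q` suffix of `S`. -/
def suf {α : Type*} (S : List α) (q : ℕ) : List α := S.drop (S.length - q)

/-- `Occ(T,P) = {k ≥ 1 : T[k:k+|P|-1] = P}`. -/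
def Occ {α : Type*} (T P : List α) : Set ℕ := {k | 1 ≤ k ∧ substr T k (k + P.length - 1) = P}

/-- A straight-line program of size `n`: each variable `X_i` (0-indexed here) is either a
terminal `a ∈ Σ` or a concatenation `X_ℓ X_r` with `ℓ, r < i`. -/
structure SLP (α : Type*) (n : ℕ) where
  rule : Fin n → α ⊕ (Fin n × Fin n)
  wf : ∀ i l r, rule i = Sum.inr (l, r) → l < i ∧ r < i

namespace SLP

variable {α : Type*} {n : ℕ}

/-- The string `val(X_i)` derived by variable `X_i`. -/
def val (S : SLP α n) : Fin n → List α
  | i =>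
    match h : S.rule i with
    | Sum.inl a => [a]
    | Sum.inr (l, r) => S.val l ++ S.val r
termination_by i => i.val
decreasing_by
  · exact (S.wf i l r h).1
  · exact (S.wf i l r h).2

/-- The set `itv(X_i)` of occurrence intervals of `X_i` in the derivation of `T = val(X_n)`. -/
def itv (S : SLP α n) : Fin n → Set (ℕ × ℕ)
  | i =>
    if i.val = n - 1 then {(1, (S.val i).length)}
    else
      {p | ∃ k l, ∃ h : S.rule k = Sum.inr (l, i),
          ∃ uv ∈ S.itv k, p = (uv.1 + (S.val l).length, uv.2)} ∪
      {p | ∃ k r, ∃ h : S.rule k = Sum.inr (i, r),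
          ∃ uv ∈ S.itv k, p = (uv.1, uv.1 + (S.val i).length - 1)}
termination_by i => n - i.val
decreasing_by
  · have h1 : (i : ℕ) < (k : ℕ) := (S.wf k l i h).2
    have h2 : (k : ℕ) < n := k.isLt
    omega
  · have h1 : (i : ℕ) < (k : ℕ) := (S.wf k i r h).1
    have h2 : (k : ℕ) < n := k.isLt
    omega

/-- `vOcc(X_i) = |itv(X_i)|`. -/
noncomputable def vOcc (S : SLP α n) (i : Fin n) : ℕ := (S.itv i).ncard

end SLP

namespace SLP

/-- For a concatenation variable `X_i = X_ℓ X_r`, the string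
`t_i = suf(val(X_ℓ), q-1) · pre(val(X_r), q-1)` (and `[]` for terminal variables). -/
def tstr {α : Type*} {n : ℕ} (S : SLP α n) (q : ℕ) (i : Fin n) : List α :=
  match S.rule i with
  | Sum.inl _ => []
  | Sum.inr (l, r) => suf (S.val l) (q - 1) ++ pre (S.val r) (q - 1)

end SLP

namespace SLP

/-- The indices `i_1 < … < i_m`: exactly those `i` with `X_i = X_ℓ X_r` and `|val(X_i)| ≥ q`,
in increasing order. -/
def idxs {α : Type*} {n : ℕ} (S : SLP α n) (q : ℕ) : List (Fin n) :=
  (List.finRange n).filter (fun i => (S.rule i).isRight && decide (q ≤ (S.val i).length))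

/-- The string `z = t_{i_1} · t_{i_2} · … · t_{i_m}`. -/
def zstr {α : Type*} {n : ℕ} (S : SLP α n) (q : ℕ) : List α :=
  ((S.idxs q).map (S.tstr q)).flatten

/-- The list of weights of the positions of `z`, blockwise: the `s`-th position of the block
`t_{i_j}` has weight `vOcc(X_{i_j})` if `s ≤ |t_{i_j}| - q + 1`, and `0` otherwise. -/
noncomputable def wlist {α : Type*} {n : ℕ} (S : SLP α n) (q : ℕ) : List ℕ :=
  ((S.idxs q).map (fun i =>
    (List.range (S.tstr q i).length).map
      (fun s => if s + 1 ≤ (S.tstr q i).length + 1 - q then S.vOcc i else 0))).flatten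

/-- The weight `w(p)` of position `p` (1-indexed) of `z`. -/
noncomputable def wfun {α : Type*} {n : ℕ} (S : SLP α n) (q p : ℕ) : ℕ :=
  (S.wlist q).getD (p - 1) 0

end SLP


section OccLemmas
variable {α : Type*}

lemma mem_Occ_iff {T P : List α} {k : ℕ} :
    k ∈ Occ T P ↔ 1 ≤ k ∧ P <+: T.drop (k - 1) := by
  unfold Occ substr
  simp only [Set.mem_setOf_eq]
  constructor
  · rintro ⟨hk, h⟩
    refine ⟨hk, ?_⟩
    rw [List.prefix_iff_eq_take]
    have : k + P.length - 1 + 1 - k = P.length := by omega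
    rw [this] at h
    exact h.symm
  · rintro ⟨hk, h⟩
    refine ⟨hk, ?_⟩
    have : k + P.length - 1 + 1 - k = P.length := by omega
    rw [this]
    exact (List.prefix_iff_eq_take.mp h).symm

lemma Occ_subset {T P : List α} (hP : P ≠ []) : Occ T P ⊆ Set.Icc 1 T.length := by
  intro k hk
  rw [mem_Occ_iff] at hk
  obtain ⟨hk1, hk2⟩ := hk
  have := hk2.length_le
  have hd : (T.drop (k-1)).length = T.length - (k-1) := List.length_drop
  have hp : 0 < P.length := List.length_pos_iff.mpr hP
  exact ⟨hk1, by omega⟩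

lemma Occ_finite {T P : List α} (hP : P ≠ []) : (Occ T P).Finite :=
  (Set.finite_Icc 1 T.length).subset (Occ_subset hP)

lemma Occ_nil {P : List α} (hP : P ≠ []) : Occ ([] : List α) P = ∅ := by
  ext k
  simp only [mem_Occ_iff, Set.mem_empty_iff_false, iff_false]
  rintro ⟨hk, h⟩
  rw [List.drop_nil] at h
  have := h.length_le
  simp only [List.length_nil, Nat.le_zero] at this
  exact hP (List.eq_nil_of_length_eq_zero this)

/-- occurrence entirely within the middle part of `A ++ C ++ B` -/
lemma Occ_mid {A C B P : List α} {p : ℕ} (h1 : A.length < p)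
    (h2 : p + P.length ≤ A.length + C.length + 1) :
    p ∈ Occ (A ++ C ++ B) P ↔ p - A.length ∈ Occ C P := by
  rw [mem_Occ_iff, mem_Occ_iff]
  have hk : 1 ≤ p := by omega
  have hk2 : 1 ≤ p - A.length := by omega
  simp only [hk, hk2, true_and]
  rw [List.append_assoc, List.drop_append]
  have hAd : A.drop (p-1) = [] := List.drop_eq_nil_of_le (by omega)
  rw [hAd, List.nil_append]
  have : p - 1 - A.length = p - A.length - 1 := by omega
  rw [this]
  rw [List.drop_append]
  constructor
  · intro h
    rw [List.prefix_iff_eq_take] at h ⊢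
    have hlen : P.length ≤ (C.drop (p - A.length - 1)).length := by
      rw [List.length_drop]; omega
    have h0 : P.length - (C.drop (p - A.length - 1)).length = 0 := by omega
    rw [List.take_append, h0, List.take_zero, List.append_nil] at h
    exact h
  · intro h
    exact h.trans (List.prefix_append _ _)

end OccLemmas
section OccMore
variable {α : Type*}

lemma Occ_bound {T P : List α} {k : ℕ} (hP : P ≠ []) (h : k ∈ Occ T P) :
    1 ≤ k ∧ k + P.length ≤ T.length + 1 := by
  rw [mem_Occ_iff] at h
  obtain ⟨h1, h2⟩ := h
  have h3 := h2.length_le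
  rw [List.length_drop] at h3
  have h4 : 1 ≤ P.length := List.length_pos_iff.mpr hP
  exact ⟨h1, by omega⟩

lemma Occ_empty_of_short {T P : List α} (h : T.length < P.length) : Occ T P = ∅ := by
  ext k
  simp only [Set.mem_empty_iff_false, iff_false]
  intro hk
  have h4 : 1 ≤ P.length := by omega
  have := Occ_bound (by rw [← List.length_pos_iff]; omega) hk
  omega

end OccMore
namespace SLP
variable {α : Type*} {n : ℕ}

lemma val_terminal (S : SLP α n) {i : Fin n} {a : α} (h : S.rule i = Sum.inl a) :
    S.val i = [a] := by
  rw [val]; split <;> simp_all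

lemma val_concat (S : SLP α n) {i l r : Fin n} (h : S.rule i = Sum.inr (l, r)) :
    S.val i = S.val l ++ S.val r := by
  rw [val]; split <;> simp_all

lemma val_ne_nil (S : SLP α n) (i : Fin n) : S.val i ≠ [] := by
  rcases h : S.rule i with a | ⟨l, r⟩
  · rw [S.val_terminal h]; simp
  · rw [S.val_concat h]
    have hl := S.val_ne_nil l
    simp only [ne_eq, List.append_eq_nil_iff, not_and]
    intro h'
    exact absurd h' hl
termination_by i.val
decreasing_by exact (S.wf i l r h).1

lemma val_length_pos (S : SLP α n) (i : Fin n) : 0 < (S.val i).length :=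
  List.length_pos_iff.mpr (S.val_ne_nil i)

variable (hn : 0 < n)

/-- The root variable. -/
def root (S : SLP α n) (hn : 0 < n) : Fin n := ⟨n - 1, Nat.sub_lt hn one_pos⟩

/-- `Node S hn i u` : variable `i` occurs as a node of the derivation tree of
`T = val(root)` at (1-indexed) position `u`. -/
inductive Node (S : SLP α n) (hn : 0 < n) : Fin n → ℕ → Prop
  | root : Node S hn (S.root hn) 1
  | left {k : Fin n} {u : ℕ} {l r : Fin n} :
      Node S hn k u → S.rule k = Sum.inr (l, r) → Node S hn l u
  | right {k : Fin n} {u : ℕ} {l r : Fin n} :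
      Node S hn k u → S.rule k = Sum.inr (l, r) → Node S hn r (u + (S.val l).length)

lemma Node.one_le {S : SLP α n} {i : Fin n} {u : ℕ} (h : Node S hn i u) : 1 ≤ u := by
  induction h with
  | root => exact le_refl 1
  | left _ _ ih => exact ih
  | right _ _ ih => omega

/-- Each node is a genuine placed occurrence: `T = A ++ val i ++ B` with `|A| = u - 1`. -/
lemma Node.place {S : SLP α n} {i : Fin n} {u : ℕ} (h : Node S hn i u) :
    ∃ A B : List α, S.val (S.root hn) = A ++ S.val i ++ B ∧ A.length = u - 1 := by
  induction h with
  | root => exact ⟨[], [], by simp, rfl⟩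
  | @left k u l r hk hrule ih =>
    obtain ⟨A, B, hT, hA⟩ := ih
    exact ⟨A, S.val r ++ B, by rw [hT, S.val_concat hrule]; simp, hA⟩
  | @right k u l r hk hrule ih =>
    obtain ⟨A, B, hT, hA⟩ := ih
    refine ⟨A ++ S.val l, B, by rw [hT, S.val_concat hrule]; simp, ?_⟩
    have h1 : 1 ≤ u := hk.one_le hn
    simp [List.length_append, hA]
    omega

lemma Node.root_eq_one {S : SLP α n} {u : ℕ} (h : Node S hn (S.root hn) u) : u = 1 := by
  cases h with
  | root => rfl
  | left hk hrule =>
    exfalso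
    rename_i k r
    have h1 := (S.wf _ _ _ hrule).1
    have h2 := k.isLt
    rw [Fin.lt_def] at h1
    simp only [SLP.root] at h1
    omega
  | right hk hrule =>
    exfalso
    rename_i k u' l
    have h1 := (S.wf _ _ _ hrule).2
    have h2 := k.isLt
    rw [Fin.lt_def] at h1
    simp only [SLP.root] at h1
    omega

/-- Inversion for non-root nodes. -/
lemma Node.inv {S : SLP α n} {i : Fin n} {u : ℕ} (h : Node S hn i u)
    (hi : i ≠ S.root hn) :
    (∃ k r u₀, Node S hn k u₀ ∧ S.rule k = Sum.inr (i, r) ∧ u = u₀) ∨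
    (∃ k l u₀, Node S hn k u₀ ∧ S.rule k = Sum.inr (l, i) ∧ u = u₀ + (S.val l).length) := by
  cases h with
  | root => exact absurd rfl hi
  | @left k u l r hk hrule => exact Or.inl ⟨k, r, u, hk, hrule, rfl⟩
  | @right k u l r hk hrule => exact Or.inr ⟨k, l, u, hk, hrule, rfl⟩

end SLP
namespace SLP
variable {α : Type*} {n : ℕ}

lemma itv_eq (S : SLP α n) (hn : 0 < n) (i : Fin n) :
    S.itv i = {p | ∃ u, Node S hn i u ∧ p = (u, u + (S.val i).length - 1)} := by
  rw [SLP.itv]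
  by_cases hi : i.val = n - 1
  · have hiroot : i = S.root hn := Fin.ext hi
    rw [if_pos hi]
    ext p
    simp only [Set.mem_singleton_iff, Set.mem_setOf_eq]
    constructor
    · rintro rfl
      refine ⟨1, hiroot ▸ Node.root, ?_⟩
      have := S.val_length_pos i
      rw [Prod.mk.injEq]
      exact ⟨rfl, by omega⟩
    · rintro ⟨u, hu, rfl⟩
      have : u = 1 := Node.root_eq_one hn (hiroot ▸ hu)
      subst this
      have := S.val_length_pos i
      rw [Prod.mk.injEq]
      exact ⟨rfl, by omega⟩
  · rw [if_neg hi]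
    have hiroot : i ≠ S.root hn := fun h => hi (by rw [h]; rfl)
    ext p
    simp only [Set.mem_union, Set.mem_setOf_eq]
    constructor
    · rintro (⟨k, l, hrule, uv, huv, rfl⟩ | ⟨k, r, hrule, uv, huv, rfl⟩)
      · rw [S.itv_eq hn k] at huv
        obtain ⟨u₀, hnode, rfl⟩ := huv
        refine ⟨u₀ + (S.val l).length, Node.right hnode hrule, ?_⟩
        have hlen : (S.val k).length = (S.val l).length + (S.val i).length := by
          rw [S.val_concat hrule, List.length_append]
        have := S.val_length_pos i
        simp only [hlen]
        congr 1
        omega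
      · rw [S.itv_eq hn k] at huv
        obtain ⟨u₀, hnode, rfl⟩ := huv
        exact ⟨u₀, Node.left hnode hrule, rfl⟩
    · rintro ⟨u, hu, rfl⟩
      rcases hu.inv hn hiroot with ⟨k, r, u₀, hk, hrule, rfl⟩ | ⟨k, l, u₀, hk, hrule, rfl⟩
      · refine Or.inr ⟨k, r, hrule, (u, u + (S.val k).length - 1), ?_, rfl⟩
        rw [S.itv_eq hn k]
        exact ⟨u, hk, rfl⟩
      · refine Or.inl ⟨k, l, hrule, (u₀, u₀ + (S.val k).length - 1), ?_, ?_⟩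
        · rw [S.itv_eq hn k]
          exact ⟨u₀, hk, rfl⟩
        · have hlen : (S.val k).length = (S.val l).length + (S.val i).length := by
            rw [S.val_concat hrule, List.length_append]
          have := S.val_length_pos i
          simp only [hlen]
          congr 1
          omega
termination_by n - i.val
decreasing_by
  · have h1 : (i : ℕ) < (k : ℕ) := (S.wf k l i hrule).2
    have h2 : (k : ℕ) < n := k.isLt
    omega
  · have h1 : (i : ℕ) < (k : ℕ) := (S.wf k i r hrule).1
    have h2 : (k : ℕ) < n := k.isLt
    omega
  · have h1 : (i : ℕ) < (k : ℕ) := (S.wf k i r hrule).1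
    have h2 : (k : ℕ) < n := k.isLt
    omega
  · have h1 : (i : ℕ) < (k : ℕ) := (S.wf k l i hrule).2
    have h2 : (k : ℕ) < n := k.isLt
    omega

lemma node_subset (S : SLP α n) (hn : 0 < n) (i : Fin n) :
    {u | Node S hn i u} ⊆ Set.Icc 1 (S.val (S.root hn)).length := by
  intro u hu
  obtain ⟨A, B, hT, hA⟩ := Node.place hn hu
  have h1 := Node.one_le hn hu
  have := S.val_length_pos i
  refine ⟨h1, ?_⟩
  rw [hT]
  simp only [List.length_append]
  omega

lemma node_finite (S : SLP α n) (hn : 0 < n) (i : Fin n) :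
    {u | Node S hn i u}.Finite :=
  (Set.finite_Icc _ _).subset (S.node_subset hn i)

lemma vOcc_eq (S : SLP α n) (hn : 0 < n) (i : Fin n) :
    S.vOcc i = {u | Node S hn i u}.ncard := by
  unfold vOcc
  rw [S.itv_eq hn i]
  have himg : {p : ℕ × ℕ | ∃ u, Node S hn i u ∧ p = (u, u + (S.val i).length - 1)} =
      (fun u => (u, u + (S.val i).length - 1)) '' {u | Node S hn i u} := by
    ext p
    simp only [Set.mem_setOf_eq, Set.mem_image]
    constructor
    · rintro ⟨u, h1, h2⟩; exact ⟨u, h1, h2.symm⟩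
    · rintro ⟨u, h1, h2⟩; exact ⟨u, h1, h2.symm⟩
  rw [himg, Set.ncard_image_of_injective]
  intro a b hab
  simpa using (Prod.ext_iff.mp hab).1

end SLP
namespace SLP
variable {α : Type*} {n : ℕ}

/-- The occurrence `[p, p+q-1]` fits inside the subtree rooted at the placed node `x`. -/
def inside (S : SLP α n) (q p : ℕ) (x : Fin n × ℕ) : Prop :=
  x.2 ≤ p ∧ p + q ≤ x.2 + (S.val x.1).length

/-- The occurrence `[p, p+q-1]` crosses the split of the placed concatenation node `x`. -/
def belongs (S : SLP α n) (q p : ℕ) (x : Fin n × ℕ) : Prop :=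
  ∃ l r, S.rule x.1 = Sum.inr (l, r) ∧ x.2 ≤ p ∧ p + q ≤ x.2 + (S.val x.1).length ∧
    p < x.2 + (S.val l).length ∧ x.2 + (S.val l).length < p + q

/-- One deterministic descent step towards the child containing `[p, p+q-1]`. -/
def Step (S : SLP α n) (q p : ℕ) (x y : Fin n × ℕ) : Prop :=
  ∃ l r, S.rule x.1 = Sum.inr (l, r) ∧
    ((p + q ≤ x.2 + (S.val l).length ∧ y = (l, x.2)) ∨
     (x.2 + (S.val l).length ≤ p ∧ y = (r, x.2 + (S.val l).length)))

lemma step_right_unique (S : SLP α n) {q p : ℕ} (hq : 1 ≤ q) :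
    Relator.RightUnique (S.Step q p) := by
  rintro x y z ⟨l, r, hrule, hy⟩ ⟨l', r', hrule', hz⟩
  rw [hrule] at hrule'
  obtain ⟨rfl, rfl⟩ : l = l' ∧ r = r' := by
    simpa [Prod.ext_iff] using hrule'
  rcases hy with ⟨h1, rfl⟩ | ⟨h1, rfl⟩ <;> rcases hz with ⟨h2, rfl⟩ | ⟨h2, rfl⟩
  · rfl
  · omega
  · omega
  · rfl

lemma belongs_no_step {S : SLP α n} {q p : ℕ} {x y : Fin n × ℕ}
    (hb : S.belongs q p x) (hs : S.Step q p x y) : False := by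
  obtain ⟨l, r, hrule, _, _, h3, h4⟩ := hb
  obtain ⟨l', r', hrule', hy⟩ := hs
  rw [hrule] at hrule'
  obtain ⟨rfl, rfl⟩ : l = l' ∧ r = r' := by
    simpa [Prod.ext_iff] using hrule'
  rcases hy with ⟨h1, _⟩ | ⟨h1, _⟩ <;> omega

lemma step_node {S : SLP α n} (hn : 0 < n) {q p : ℕ} {x y : Fin n × ℕ}
    (hx : Node S hn x.1 x.2) (hs : S.Step q p x y) : Node S hn y.1 y.2 := by
  obtain ⟨l, r, hrule, hy⟩ := hs
  rcases hy with ⟨_, rfl⟩ | ⟨_, rfl⟩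
  · exact Node.left hx hrule
  · exact Node.right hx hrule

/-- Existence of a belongs-node below any node containing the occurrence window. -/
lemma exists_belongs_from (S : SLP α n) (hn : 0 < n) {q p : ℕ} (hq : 2 ≤ q)
    (x : Fin n × ℕ) (hx : Node S hn x.1 x.2) (hin : S.inside q p x) :
    ∃ y, Relation.ReflTransGen (S.Step q p) x y ∧ S.belongs q p y := by
  rcases hrule : S.rule x.1 with a | ⟨l, r⟩
  · exfalso
    obtain ⟨h1, h2⟩ := hin
    rw [S.val_terminal hrule] at h2
    simp only [List.length_singleton] at h2
    omega
  · by_cases hL : p + q ≤ x.2 + (S.val l).length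
    · have hstep : S.Step q p x (l, x.2) := ⟨l, r, hrule, Or.inl ⟨hL, rfl⟩⟩
      have hin' : S.inside q p (l, x.2) := ⟨hin.1, hL⟩
      obtain ⟨y, hy1, hy2⟩ := S.exists_belongs_from hn hq (l, x.2)
        (Node.left hx hrule) hin'
      exact ⟨y, Relation.ReflTransGen.head hstep hy1, hy2⟩
    · by_cases hR : x.2 + (S.val l).length ≤ p
      · have hstep : S.Step q p x (r, x.2 + (S.val l).length) :=
          ⟨l, r, hrule, Or.inr ⟨hR, rfl⟩⟩
        have hlen : (S.val x.1).length = (S.val l).length + (S.val r).length := by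
          rw [S.val_concat hrule, List.length_append]
        have hin' : S.inside q p (r, x.2 + (S.val l).length) := by
          refine ⟨hR, ?_⟩
          have := hin.2
          simp only [inside] at this ⊢
          omega
        obtain ⟨y, hy1, hy2⟩ := S.exists_belongs_from hn hq (r, x.2 + (S.val l).length)
          (Node.right hx hrule) hin'
        exact ⟨y, Relation.ReflTransGen.head hstep hy1, hy2⟩
      · exact ⟨x, Relation.ReflTransGen.refl,
          ⟨l, r, hrule, hin.1, hin.2, by omega, by omega⟩⟩
termination_by x.1.val
decreasing_by
  · exact (S.wf _ _ _ hrule).1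
  · exact (S.wf _ _ _ hrule).2

/-- Any placed node containing the occurrence window is reached by the descent. -/
lemma reaches_of_inside (S : SLP α n) (hn : 0 < n) {q p : ℕ} {k : Fin n} {u : ℕ}
    (hx : Node S hn k u) (hin : S.inside q p (k, u)) :
    Relation.ReflTransGen (S.Step q p) (S.root hn, 1) (k, u) := by
  induction hx with
  | root => exact Relation.ReflTransGen.refl
  | @left k u l r hk hrule ih =>
    have hlen : (S.val k).length = (S.val l).length + (S.val r).length := by
      rw [S.val_concat hrule, List.length_append]
    have hin' : S.inside q p (k, u) := by
      obtain ⟨h1, h2⟩ := hin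
      simp only [inside] at h1 h2 ⊢
      omega
    exact (ih hin').tail ⟨l, r, hrule, Or.inl ⟨hin.2, rfl⟩⟩
  | @right k u l r hk hrule ih =>
    have hlen : (S.val k).length = (S.val l).length + (S.val r).length := by
      rw [S.val_concat hrule, List.length_append]
    have hin' : S.inside q p (k, u) := by
      obtain ⟨h1, h2⟩ := hin
      simp only [inside] at h1 h2 ⊢
      constructor <;> omega
    exact (ih hin').tail ⟨l, r, hrule, Or.inr ⟨hin.1, rfl⟩⟩

lemma belongs_inside {S : SLP α n} {q p : ℕ} {x : Fin n × ℕ}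
    (hb : S.belongs q p x) : S.inside q p x := by
  obtain ⟨l, r, _, h1, h2, _, _⟩ := hb
  exact ⟨h1, h2⟩

/-- Uniqueness of the belongs-node. -/
lemma belongs_unique (S : SLP α n) (hn : 0 < n) {q p : ℕ} (hq : 2 ≤ q)
    {x y : Fin n × ℕ} (hxn : Node S hn x.1 x.2) (hyn : Node S hn y.1 y.2)
    (hx : S.belongs q p x) (hy : S.belongs q p y) : x = y := by
  have hrx := S.reaches_of_inside hn hxn (belongs_inside hx)
  have hry := S.reaches_of_inside hn hyn (belongs_inside hy)
  rcases Relation.ReflTransGen.total_of_right_unique (S.step_right_unique (by omega)) hrx hry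
    with h | h
  · rcases Relation.ReflTransGen.cases_head h with heq | ⟨c, hc, _⟩
    · simpa using heq
    · exact absurd hc (fun hc => belongs_no_step hx hc)
  · rcases Relation.ReflTransGen.cases_head h with heq | ⟨c, hc, _⟩
    · exact (by simpa using heq : y = x).symm
    · exact absurd hc (fun hc => belongs_no_step hy hc)

/-- Existence (from the root) for genuine occurrences. -/
lemma exists_belongs (S : SLP α n) (hn : 0 < n) {q p : ℕ} (hq : 2 ≤ q)
    (h1 : 1 ≤ p) (h2 : p + q ≤ 1 + (S.val (S.root hn)).length) :
    ∃ y, Node S hn y.1 y.2 ∧ S.belongs q p y := by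
  obtain ⟨y, hy1, hy2⟩ := S.exists_belongs_from hn hq (S.root hn, 1) Node.root ⟨h1, h2⟩
  refine ⟨y, ?_, hy2⟩
  clear hy2
  induction hy1 with
  | refl => exact Node.root
  | tail _ hs ih => exact step_node hn ih hs

end SLP
namespace SLP
variable {α : Type*} {n : ℕ}

lemma tstr_short (S : SLP α n) {q : ℕ} (i : Fin n) (hq : 1 ≤ q) :
    (S.tstr q i).length ≤ (S.val i).length := by
  unfold tstr
  rcases h : S.rule i with a | ⟨l, r⟩
  · simp
  · rw [S.val_concat h]
    simp only [List.length_append, suf, pre, List.length_drop, List.length_take]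
    omega

lemma fiber_eq (S : SLP α n) (hn : 0 < n) {q : ℕ} (hq : 2 ≤ q) {P : List α}
    (hP : P.length = q) {k : Fin n} {u : ℕ} (hk : Node S hn k u)
    {l r : Fin n} (hrule : S.rule k = Sum.inr (l, r)) :
    {p | p ∈ Occ (S.val (S.root hn)) P ∧ S.belongs q p (k, u)} =
      (fun s => s + ((u - 1) + ((S.val l).length - (q - 1)))) '' Occ (S.tstr q k) P := by
  obtain ⟨A, B, hT, hA⟩ := Node.place hn hk
  have hu1 : 1 ≤ u := Node.one_le hn hk
  set m := (S.val l).length with hm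
  set d := m - (q - 1) with hd
  have hdm : d ≤ m := Nat.sub_le _ _
  have ht : S.tstr q k = suf (S.val l) (q-1) ++ pre (S.val r) (q-1) := by
    unfold tstr; rw [hrule]
  have ha : (suf (S.val l) (q-1)).length = m - d := by
    simp only [suf, List.length_drop]
    try omega
  have hb : (pre (S.val r) (q-1)).length = min (q-1) (S.val r).length := by
    simp only [pre, List.length_take]
  have hlen : (S.val k).length = m + (S.val r).length := by
    rw [S.val_concat hrule, List.length_append]
  have hT' : S.val (S.root hn) =
      (A ++ (S.val l).take d) ++ S.tstr q k ++ ((S.val r).drop (q-1) ++ B) := by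
    rw [hT, S.val_concat hrule, ht]
    simp only [suf, pre, List.append_assoc, ← hm, ← hd]
    congr 1
    rw [← List.append_assoc ((S.val l).take d), List.take_append_drop]
    congr 1
    rw [← List.append_assoc ((S.val r).take (q-1)), List.take_append_drop]
  have hA' : (A ++ (S.val l).take d).length = (u - 1) + d := by
    simp only [List.length_append, List.length_take, hA]
    omega
  have htlen : (S.tstr q k).length = (m - d) + min (q-1) (S.val r).length := by
    rw [ht, List.length_append, ha, hb]
  have hml : 1 ≤ m := S.val_length_pos l
  have hrl : 1 ≤ (S.val r).length := S.val_length_pos r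
  ext p
  simp only [Set.mem_setOf_eq, Set.mem_image]
  constructor
  · rintro ⟨hocc, hbel⟩
    obtain ⟨l', r', hrule', h1, h2, h3, h4⟩ := hbel
    rw [hrule] at hrule'
    obtain ⟨rfl, rfl⟩ : l = l' ∧ r = r' := by simpa [Prod.ext_iff] using hrule'
    simp only [← hm] at h3 h4
    simp only [hlen] at h2
    have hs1 : (u - 1) + d < p := by omega
    refine ⟨p - ((u - 1) + d), ?_, by omega⟩
    rw [hT'] at hocc
    have := (Occ_mid (by omega : (A ++ (S.val l).take d).length < p)
      (by rw [hA', htlen]; omega)).mp hocc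
    rwa [hA'] at this
  · rintro ⟨s, hs, rfl⟩
    obtain ⟨hs1, hs2⟩ := Occ_bound (by rw [← List.length_pos_iff]; omega) hs
    rw [hP] at hs2
    rw [htlen] at hs2
    constructor
    · rw [hT']
      refine (Occ_mid (by omega : (A ++ (S.val l).take d).length < s + ((u-1)+d))
        (by rw [hA', htlen, hP]; omega)).mpr ?_
      rw [hA']
      have : s + ((u-1)+d) - ((u-1)+d) = s := by omega
      rwa [this]
    · exact ⟨l, r, hrule, by omega, by simp only [hlen]; omega, by omega, by omega⟩

lemma fiber_ncard (S : SLP α n) (hn : 0 < n) {q : ℕ} (hq : 2 ≤ q) {P : List α}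
    (hP : P.length = q) {k : Fin n} {u : ℕ} (hk : Node S hn k u) :
    {p | p ∈ Occ (S.val (S.root hn)) P ∧ S.belongs q p (k, u)}.ncard =
      (Occ (S.tstr q k) P).ncard := by
  rcases hrule : S.rule k with a | ⟨l, r⟩
  · have h1 : {p | p ∈ Occ (S.val (S.root hn)) P ∧ S.belongs q p (k, u)} = ∅ := by
      ext p
      simp only [Set.mem_setOf_eq, Set.mem_empty_iff_false, iff_false, not_and]
      rintro _ ⟨l', r', hrule', _⟩
      rw [hrule] at hrule'
      exact absurd hrule' (by simp)
    have h2 : S.tstr q k = [] := by unfold tstr; rw [hrule]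
    rw [h1, h2, Occ_nil (by rw [← List.length_pos_iff]; omega : P ≠ [])]
  · rw [S.fiber_eq hn hq hP hk hrule]
    exact Set.ncard_image_of_injective _ (add_left_injective _)

end SLP
namespace SLP
variable {α : Type*} {n : ℕ}

lemma lhs_count (S : SLP α n) (hn : 0 < n) {q : ℕ} (hq : 2 ≤ q) {P : List α}
    (hP : P.length = q) :
    (Occ (S.val (S.root hn)) P).ncard =
      ∑ k : Fin n, S.vOcc k * (Occ (S.tstr q k) P).ncard := by
  classical
  have hPne : P ≠ [] := by rw [← List.length_pos_iff]; omega
  set T := S.val (S.root hn) with hT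
  set OccF := (Occ_finite (T := T) hPne).toFinset with hOccF
  set N : Finset (Fin n × ℕ) :=
    (Finset.univ ×ˢ Finset.Icc 1 T.length).filter (fun x => Node S hn x.1 x.2) with hN
  have hmemN : ∀ x : Fin n × ℕ, x ∈ N ↔ Node S hn x.1 x.2 := by
    intro x
    simp only [hN, Finset.mem_filter, Finset.mem_product, Finset.mem_univ, true_and,
      and_iff_right_iff_imp]
    intro hx
    have := S.node_subset hn x.1 hx
    simp only [Set.mem_Icc] at this
    rw [Finset.mem_Icc]
    exact this
  set Φ : ℕ → Fin n × ℕ := fun p =>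
    if h : ∃ x, Node S hn x.1 x.2 ∧ S.belongs q p x then h.choose else (S.root hn, 1) with hΦ
  have hΦ_spec : ∀ p ∈ Occ T P, Node S hn (Φ p).1 (Φ p).2 ∧ S.belongs q p (Φ p) := by
    intro p hp
    obtain ⟨h1, h2⟩ := Occ_bound hPne hp
    rw [hP] at h2
    have hex : ∃ x, Node S hn x.1 x.2 ∧ S.belongs q p x :=
      S.exists_belongs hn hq h1 (by rw [← hT]; omega)
    simp only [hΦ, dif_pos hex]
    exact hex.choose_spec
  rw [Set.ncard_eq_toFinset_card _ (Occ_finite (T := T) hPne)]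
  rw [Finset.card_eq_sum_card_fiberwise (f := Φ) (t := N)
    (fun p hp => by
      rw [Finset.mem_coe, hmemN]
      exact (hΦ_spec p (by simpa [hOccF, Set.Finite.mem_toFinset] using hp)).1)]
  have hfiber : ∀ x ∈ N, (OccF.filter (fun p => Φ p = x)).card =
      (Occ (S.tstr q x.1) P).ncard := by
    intro x hx
    have hxnode : Node S hn x.1 x.2 := (hmemN x).mp hx
    have hset : ↑(OccF.filter (fun p => Φ p = x)) =
        {p | p ∈ Occ T P ∧ S.belongs q p (x.1, x.2)} := by
      ext p
      simp only [Finset.coe_filter, Set.mem_setOf_eq, hOccF, Set.Finite.mem_toFinset]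
      constructor
      · rintro ⟨hp, rfl⟩
        exact ⟨hp, (hΦ_spec p hp).2⟩
      · rintro ⟨hp, hbel⟩
        refine ⟨hp, ?_⟩
        obtain ⟨hnode', hbel'⟩ := hΦ_spec p hp
        exact S.belongs_unique hn hq hnode' hxnode hbel' hbel
    have := S.fiber_ncard hn hq hP hxnode
    rw [← this, ← hset, Set.ncard_coe_finset]
  rw [Finset.sum_congr rfl hfiber]
  rw [← Finset.sum_fiberwise_of_maps_to
    (fun (x : Fin n × ℕ) (_ : x ∈ N) => Finset.mem_univ x.1)
    (fun x => (Occ (S.tstr q x.1) P).ncard)]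
  refine Finset.sum_congr rfl fun k _ => ?_
  have hconst : ∀ x ∈ N.filter (fun x => x.1 = k),
      (Occ (S.tstr q x.1) P).ncard = (Occ (S.tstr q k) P).ncard := by
    intro x hx
    rw [(Finset.mem_filter.mp hx).2]
  rw [Finset.sum_congr rfl hconst, Finset.sum_const, smul_eq_mul]
  congr 1
  rw [S.vOcc_eq hn k]
  have hNk : N.filter (fun x => x.1 = k) =
      ((S.node_finite hn k).toFinset).image (fun u => (k, u)) := by
    ext x
    simp only [Finset.mem_filter, Finset.mem_image, Set.Finite.mem_toFinset, Set.mem_setOf_eq,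
      hmemN]
    constructor
    · rintro ⟨hnode, rfl⟩
      exact ⟨x.2, hnode, rfl⟩
    · rintro ⟨u, hu, rfl⟩
      exact ⟨hu, rfl⟩
  rw [hNk, Finset.card_image_of_injective _ (fun a b hab => by simpa using hab),
    Set.ncard_eq_toFinset_card _ (S.node_finite hn k)]

end SLP
section Flatten
variable {α : Type*}

lemma Occ_append_right {C D P : List α} {p : ℕ} (h : C.length < p) :
    p ∈ Occ (C ++ D) P ↔ p - C.length ∈ Occ D P := by
  rw [mem_Occ_iff, mem_Occ_iff]
  have h1 : (1 ≤ p) := by omega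
  have h2 : 1 ≤ p - C.length := by omega
  simp only [h1, h2, true_and]
  rw [List.drop_append, List.drop_eq_nil_of_le (by omega : C.length ≤ p - 1),
    List.nil_append]
  have : p - 1 - C.length = p - C.length - 1 := by omega
  rw [this]

lemma Occ_append_left {C D P : List α} {p : ℕ} (hP : P ≠ []) :
    (p ∈ Occ (C ++ D) P ∧ p + P.length ≤ C.length + 1) ↔ p ∈ Occ C P := by
  constructor
  · rintro ⟨hp, hb⟩
    rw [mem_Occ_iff] at hp ⊢
    obtain ⟨h1, h2⟩ := hp
    refine ⟨h1, ?_⟩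
    rw [List.prefix_iff_eq_take] at h2 ⊢
    rw [List.drop_append] at h2
    have hd : C.length ≤ p - 1 ∨ p - 1 ≤ C.length := by omega
    have hlen : P.length ≤ (C.drop (p-1)).length := by
      rw [List.length_drop]; omega
    rw [List.take_append] at h2
    have h0 : P.length - (C.drop (p - 1)).length = 0 := by omega
    rw [h0, List.take_zero, List.append_nil] at h2
    exact h2
  · intro hp
    have hb := Occ_bound hP hp
    rw [mem_Occ_iff] at hp ⊢
    refine ⟨⟨hp.1, ?_⟩, hb.2⟩
    rw [List.drop_append]
    exact hp.2.trans (List.prefix_append _ _)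

lemma flatten_sum {q : ℕ} (hq : 2 ≤ q) {P : List α} (hP : P.length = q)
    (L : List (List α × ℕ)) :
    ∑ᶠ p ∈ Occ ((L.map Prod.fst).flatten) P,
      ((L.map (fun B => (List.range B.1.length).map
          (fun s => if s + 1 ≤ B.1.length + 1 - q then B.2 else 0))).flatten.getD (p - 1) 0) =
    (L.map (fun B => B.2 * (Occ B.1 P).ncard)).sum := by
  classical
  have hPne : P ≠ [] := by rw [← List.length_pos_iff]; omega
  induction L with
  | nil =>
    simp only [List.map_nil, List.flatten_nil, List.sum_nil]
    rw [Occ_nil hPne, finsum_mem_empty]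
  | cons B L' ih =>
    obtain ⟨C, c⟩ := B
    set m := C.length with hm
    set z' := (L'.map Prod.fst).flatten with hz
    set W' := (L'.map (fun B => (List.range B.1.length).map
          (fun s => if s + 1 ≤ B.1.length + 1 - q then B.2 else 0))).flatten with hW
    set wB := (List.range m).map (fun s => if s + 1 ≤ m + 1 - q then c else 0) with hwB
    have hwBlen : wB.length = m := by rw [hwB]; simp
    simp only [List.map_cons, List.flatten_cons, List.sum_cons]

    have hfin : (Occ (C ++ z') P).Finite := Occ_finite hPne
    have hfinC : (Occ C P).Finite := Occ_finite hPne
    have hfinZ : (Occ z' P).Finite := Occ_finite hPne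
    rw [finsum_mem_eq_finite_toFinset_sum _ hfin]
    rw [← Finset.sum_filter_add_sum_filter_not hfin.toFinset (fun p => p ≤ m)]
    have hA : ∑ p ∈ hfin.toFinset.filter (fun p => p ≤ m), (wB ++ W').getD (p - 1) 0 =
        c * (Occ C P).ncard := by
      have hcongr : ∀ p ∈ hfin.toFinset.filter (fun p => p ≤ m),
          (wB ++ W').getD (p - 1) 0 = if p ≤ m + 1 - q then c else 0 := by
        intro p hp
        simp only [Finset.mem_filter, Set.Finite.mem_toFinset] at hp
        obtain ⟨hpO, hpm⟩ := hp
        have hp1 : 1 ≤ p := (Occ_bound hPne hpO).1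
        rw [List.getD_append _ _ _ _ (by omega : p - 1 < wB.length)]
        rw [hwB, List.getD_eq_getElem _ _ (by simp; omega)]
        simp only [List.getElem_map, List.getElem_range]
        congr 1
        simp only [eq_iff_iff]
        omega
      rw [Finset.sum_congr rfl hcongr, ← Finset.sum_filter]
      rw [Finset.sum_const, smul_eq_mul]
      have hset : (hfin.toFinset.filter (fun p => p ≤ m)).filter (fun p => p ≤ m + 1 - q) =
          hfinC.toFinset := by
        ext p
        simp only [Finset.mem_filter, Set.Finite.mem_toFinset]
        constructor
        · rintro ⟨⟨hpO, hpm⟩, hpq⟩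
          have hp1 : 1 ≤ p := (Occ_bound hPne hpO).1
          exact (Occ_append_left hPne).mp ⟨hpO, by omega⟩
        · intro hpC
          have hb := Occ_bound hPne hpC
          rw [hP] at hb
          refine ⟨⟨((Occ_append_left hPne).mpr hpC).1, by omega⟩, by omega⟩
      rw [hset, mul_comm, ← Set.ncard_eq_toFinset_card _ hfinC]
    have hB : ∑ p ∈ hfin.toFinset.filter (fun p => ¬ p ≤ m), (wB ++ W').getD (p - 1) 0 =
        ∑ᶠ p ∈ Occ z' P, W'.getD (p - 1) 0 := by
      have hset : hfin.toFinset.filter (fun p => ¬ p ≤ m) =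
          hfinZ.toFinset.image (fun p => p + m) := by
        ext p
        simp only [Finset.mem_filter, Set.Finite.mem_toFinset, Finset.mem_image,
          Set.Finite.mem_toFinset]
        constructor
        · rintro ⟨hpO, hpm⟩
          refine ⟨p - m, (Occ_append_right (by omega)).mp hpO, by omega⟩
        · rintro ⟨p', hp', rfl⟩
          have h1 := (Occ_bound hPne hp').1
          refine ⟨(Occ_append_right (by omega)).mpr (by rw [← hm, Nat.add_sub_cancel]; exact hp'), by omega⟩
      rw [hset, Finset.sum_image (by intro a _ b _ hab; simp only at hab; omega)]
      rw [finsum_mem_eq_finite_toFinset_sum _ hfinZ]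
      refine Finset.sum_congr rfl fun p hp => ?_
      simp only [Set.Finite.mem_toFinset] at hp
      have h1 := (Occ_bound hPne hp).1
      rw [List.getD_append_right _ _ _ _ (by omega : wB.length ≤ p + m - 1)]
      congr 1
      omega
    rw [hA, hB, ih]

end Flatten
lemma list_sum_map_filter {β : Type*} (l : List β) (p : β → Bool) (f : β → ℕ) :
    ((l.filter p).map f).sum = (l.map (fun i => if p i then f i else 0)).sum := by
  induction l with
  | nil => rfl
  | cons a l ih => by_cases h : p a <;> simp [List.filter_cons, h, ih]

/-- correctness of the reduction to a single weighted string: for `q ≥ 2`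
and every `q`-gram `P`, `|Occ(T, P)| = Σ_{k ∈ Occ(z, P)} w(k)`. -/
theorem slp_weighted_reduction {α : Type*} {n : ℕ} (S : SLP α n) (hn : 0 < n)
    (q : ℕ) (hq : 2 ≤ q) (P : List α) (hP : P.length = q) :
    (Occ (S.val ⟨n - 1, Nat.sub_lt hn one_pos⟩) P).ncard =
      ∑ᶠ k ∈ Occ (S.zstr q) P, S.wfun q k := by
  have hL := flatten_sum hq hP ((S.idxs q).map (fun i => (S.tstr q i, S.vOcc i)))
  have h1 : (((S.idxs q).map (fun i => (S.tstr q i, S.vOcc i))).map Prod.fst).flatten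
      = S.zstr q := by
    rw [List.map_map]; rfl
  have h2 : (((S.idxs q).map (fun i => (S.tstr q i, S.vOcc i))).map
      (fun B => (List.range B.1.length).map
        (fun s => if s + 1 ≤ B.1.length + 1 - q then B.2 else 0))).flatten = S.wlist q := by
    rw [List.map_map]; rfl
  rw [h1, h2] at hL
  have hgoal : (∑ᶠ k ∈ Occ (S.zstr q) P, S.wfun q k) =
      ∑ᶠ k ∈ Occ (S.zstr q) P, (S.wlist q).getD (k - 1) 0 := rfl
  rw [hgoal, hL]
  have hroot : (⟨n - 1, Nat.sub_lt hn one_pos⟩ : Fin n) = S.root hn := rfl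
  rw [hroot, S.lhs_count hn hq hP, List.map_map]
  unfold SLP.idxs
  rw [list_sum_map_filter, ← Fin.sum_univ_def]
  refine Finset.sum_congr rfl fun k _ => ?_
  by_cases hk : ((S.rule k).isRight && decide (q ≤ (S.val k).length)) = true
  · rw [if_pos hk]
    rfl
  · rw [if_neg hk]
    simp only [Bool.and_eq_true, decide_eq_true_eq, not_and] at hk
    rcases hrule : S.rule k with a | ⟨l, r⟩
    · have ht : S.tstr q k = [] := by unfold SLP.tstr; rw [hrule]
      rw [ht, Occ_nil (by rw [← List.length_pos_iff]; omega : P ≠ []),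
        Set.ncard_empty, mul_zero]
    · have hlen : ¬ q ≤ (S.val k).length := hk (by rw [hrule]; rfl)
      have hshort : (S.tstr q k).length < P.length := by
        have := S.tstr_short k (by omega : 1 ≤ q)
        omega
      rw [Occ_empty_of_short hshort, Set.ncard_empty, mul_zero]
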